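/- Let H_1, ..., H_{d+1} be d+1 oriented hyperplanes in general position in R^d. If the intersection of the open negative halfspaces ∩_{i=1}^{d+1} H_i^- is empty, then the intersection of the open positive halfspaces ∩_{i=1}^{d+1} H_i^+ is nonempty and bounded. -/

import Mathlib

open Set

set_option maxHeartbeats 1000000 in
/-- If `d+1` oriented hyperplanes in `ℝ^d` are in general position
and the intersection of the open negative halfspaces is empty, then the
intersection of the open positive halfspaces is nonempty and bounded. -/
theorem stmt1 (d : ℕ) (hd : 0 < d)
    (f : Fin (d + 1) → (Fin d → ℝ) →ₗ[ℝ] ℝ) (c : Fin (d + 1) → ℝ)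
    (hf : ∀ i, f i ≠ 0)
    (hgen : ∀ i : Fin (d + 1), ∃! x : Fin d → ℝ, ∀ j, j ≠ i → f j x = c j)
    (hgen' : ¬ ∃ x : Fin d → ℝ, ∀ i, f i x = c i)
    (hempty : (⋂ i, {x : Fin d → ℝ | f i x < c i}) = ∅) :
    (⋂ i, {x : Fin d → ℝ | c i < f i x}).Nonempty ∧
      Bornology.IsBounded (⋂ i, {x : Fin d → ℝ | c i < f i x}) := by
  classical
  -- pointwise form of emptiness
  have hempty' : ∀ x : Fin d → ℝ, ∃ i, c i ≤ f i x := by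
    intro x
    by_contra hx
    push_neg at hx
    have hmem : x ∈ ⋂ i, {x : Fin d → ℝ | f i x < c i} := by
      simp only [mem_iInter, mem_setOf_eq]; exact hx
    rw [hempty] at hmem
    exact hmem
  -- for each i, the system f j x = z j (j ≠ i) is solvable for any RHS
  have hsurj : ∀ i : Fin (d + 1), ∀ z : Fin (d + 1) → ℝ,
      ∃ x : Fin d → ℝ, ∀ j, j ≠ i → f j x = z j := by
    intro i z
    set P : (Fin d → ℝ) →ₗ[ℝ] ({j : Fin (d + 1) // j ≠ i} → ℝ) :=
      LinearMap.pi (fun j => f j.1) with hP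
    obtain ⟨x₀, hx₀, huniq⟩ := hgen i
    have hinj : Function.Injective P := by
      rw [← LinearMap.ker_eq_bot, LinearMap.ker_eq_bot']
      intro v hv
      have hv' : ∀ j : Fin (d + 1), j ≠ i → f j v = 0 := by
        intro j hj
        exact congrFun hv ⟨j, hj⟩
      have h1 : x₀ + v = x₀ := by
        apply huniq
        intro j hj
        rw [map_add, hv' j hj, hx₀ j hj, add_zero]
      exact add_eq_left.mp h1
    have hcard : Fintype.card {j : Fin (d + 1) // j ≠ i} = d := by
      simp [Fintype.card_subtype_compl]
    have hsur : Function.Surjective P := by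
      refine (LinearMap.injective_iff_surjective_of_finrank_eq_finrank ?_).mp hinj
      rw [Module.finrank_fintype_fun_eq_card, Module.finrank_fintype_fun_eq_card,
        Fintype.card_fin, hcard]
    obtain ⟨x, hx⟩ := hsur (fun j => z j.1)
    exact ⟨x, fun j hj => congrFun hx ⟨j, hj⟩⟩
  -- a linear dependence among the functionals
  have hdep : ¬ LinearIndependent ℝ f := by
    intro h
    have h1 := h.fintype_card_le_finrank
    rw [Fintype.card_fin, Module.finrank_linearMap, Module.finrank_fintype_fun_eq_card,
      Fintype.card_fin, Module.finrank_self, mul_one] at h1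
    omega
  obtain ⟨L, hL0, i₁, hi₁⟩ := Fintype.not_linearIndependent_iff.mp hdep
  have happ : ∀ x : Fin d → ℝ, ∑ k, L k * f k x = 0 := by
    intro x
    have := congrArg (fun g : (Fin d → ℝ) →ₗ[ℝ] ℝ => g x) hL0
    simpa using this
  -- all coefficients are nonzero
  have hLne : ∀ i, L i ≠ 0 := by
    intro i hLi
    have hji : i₁ ≠ i := fun h => hi₁ (h ▸ hLi)
    obtain ⟨x, hx⟩ := hsurj i (fun j => if j = i₁ then 1 else 0)
    have h0 := happ x
    have hterm : ∀ k : Fin (d + 1), L k * f k x = if k = i₁ then L i₁ else 0 := by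
      intro k
      by_cases hk : k = i
      · subst hk
        rw [hLi, zero_mul, if_neg (Ne.symm hji)]
      · rw [hx k hk]
        by_cases hk1 : k = i₁ <;> simp [hk1]
    rw [Finset.sum_congr rfl (fun k _ => hterm k)] at h0
    simp at h0
    exact hi₁ h0
  set t : ℝ := -(∑ i, L i * c i) with ht_def
  have hkey : ∀ x : Fin d → ℝ, ∑ i, L i * (f i x - c i) = t := by
    intro x
    simp only [mul_sub]
    rw [Finset.sum_sub_distrib, happ x, zero_sub, ht_def]
  -- t ≠ 0
  have ht0 : t ≠ 0 := by
    intro h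
    obtain ⟨x₀, hx₀, -⟩ := hgen i₁
    apply hgen'
    refine ⟨x₀, fun i => ?_⟩
    by_cases hi : i = i₁
    · subst hi
      have hk := hkey x₀
      rw [h, ← Finset.add_sum_erase _ _ (Finset.mem_univ i)] at hk
      have hz : ∑ j ∈ Finset.univ.erase i, L j * (f j x₀ - c j) = 0 := by
        apply Finset.sum_eq_zero
        intro j hj
        rw [hx₀ j (Finset.ne_of_mem_erase hj), sub_self, mul_zero]
      rw [hz, add_zero] at hk
      rcases mul_eq_zero.mp hk with h' | h'
      · exact absurd h' (hLne i)
      · linarith [sub_eq_zero.mp h']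
    · exact hx₀ i hi
  -- solving for any target on the hyperplane
  have hsolve : ∀ y : Fin (d + 1) → ℝ, (∑ i, L i * y i) = t →
      ∃ x : Fin d → ℝ, ∀ i, f i x = c i + y i := by
    intro y hy
    obtain ⟨x, hx⟩ := hsurj i₁ (fun j => c j + y j)
    refine ⟨x, fun i => ?_⟩
    by_cases hi : i = i₁
    · subst hi
      have hk := hkey x
      have hsum : ∑ j, (L j * (f j x - c j) - L j * y j) = 0 := by
        rw [Finset.sum_sub_distrib, hk, hy, sub_self]
      rw [← Finset.add_sum_erase _ _ (Finset.mem_univ i)] at hsum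
      have hz : ∑ j ∈ Finset.univ.erase i, (L j * (f j x - c j) - L j * y j) = 0 := by
        apply Finset.sum_eq_zero
        intro j hj
        rw [hx j (Finset.ne_of_mem_erase hj)]
        ring
      rw [hz, add_zero] at hsum
      have heq : L i * (f i x - c i - y i) = 0 := by
        rw [mul_sub]; linarith
      rcases mul_eq_zero.mp heq with h' | h'
      · exact absurd h' (hLne i)
      · linarith
    · exact hx i hi
  -- sign claim
  have hsign : ∀ i, 0 < L i * t := by
    intro j
    rcases lt_trichotomy (L j * t) 0 with hneg | hzero | hpos
    · exfalso
      set A : ℝ := ∑ k ∈ Finset.univ.erase j, L k with hA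
      have hLj := hLne j
      have hq : t / L j < 0 := by
        have h2 : t / L j = (L j * t) / (L j ^ 2) := by
          field_simp
        rw [h2]
        exact div_neg_of_neg_of_pos hneg (by positivity)
      set ε : ℝ := (-(t / L j)) / (|A / L j| + 1) with hε
      have hεpos : 0 < ε := div_pos (by linarith) (by positivity)
      set yj : ℝ := t / L j + ε * (A / L j) with hyj
      have hyjneg : yj < 0 := by
        have h1 : ε * (A / L j) ≤ ε * |A / L j| :=
          mul_le_mul_of_nonneg_left (le_abs_self _) hεpos.le
        have h3 : ε * (|A / L j| + 1) = -(t / L j) := by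
          rw [hε]
          field_simp
        have h2 : ε * |A / L j| < -(t / L j) := by
          rw [← h3]
          exact mul_lt_mul_of_pos_left (lt_add_one |A / L j|) hεpos
        rw [hyj]; linarith
      have hysum : ∑ k, L k * (if k = j then yj else -ε) = t := by
        rw [← Finset.add_sum_erase _ _ (Finset.mem_univ j), if_pos rfl]
        have hz : ∑ k ∈ Finset.univ.erase j, L k * (if k = j then yj else -ε)
            = -ε * A := by
          rw [hA, Finset.mul_sum]
          apply Finset.sum_congr rfl
          intro k hk
          rw [if_neg (Finset.ne_of_mem_erase hk)]
          ring
        rw [hz]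
        have hLy : L j * yj = t + ε * A := by
          rw [hyj]
          field_simp
        rw [hLy]; ring
      obtain ⟨x, hx⟩ := hsolve _ hysum
      obtain ⟨i, hi⟩ := hempty' x
      have hlt : f i x < c i := by
        have hxi : f i x = c i + (if i = j then yj else -ε) := hx i
        rw [hxi]
        by_cases hij : i = j
        · rw [if_pos hij]; linarith
        · rw [if_neg hij]; linarith
      linarith
    · exact absurd hzero (mul_ne_zero (hLne j) ht0)
    · exact hpos
  have hdivpos : ∀ i, 0 < t / L i := by
    intro i
    have hLi := hLne i
    have h2 : t / L i = (L i * t) / (L i ^ 2) := by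
      field_simp
    rw [h2]
    exact div_pos (hsign i) (by positivity)
  have hd1 : (0:ℝ) < (d : ℝ) + 1 := by positivity
  -- nonemptiness
  have hyq : ∑ i, L i * ((t / L i) / ((d : ℝ) + 1)) = t := by
    have hterm : ∀ i : Fin (d + 1), L i * ((t / L i) / ((d : ℝ) + 1)) = t / ((d : ℝ) + 1) := by
      intro i
      field_simp
      exact div_self (hLne i)
    rw [Finset.sum_congr rfl (fun i _ => hterm i), Finset.sum_const, Finset.card_univ,
      Fintype.card_fin, nsmul_eq_mul]
    push_cast
    field_simp
  obtain ⟨x₁, hx₁⟩ := hsolve _ hyq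
  have hmem₁ : x₁ ∈ ⋂ i, {x : Fin d → ℝ | c i < f i x} := by
    simp only [mem_iInter, mem_setOf_eq]
    intro i
    rw [hx₁ i]
    have := div_pos (hdivpos i) hd1
    linarith
  refine ⟨⟨x₁, hmem₁⟩, ?_⟩
  -- boundedness
  set Φ : (Fin d → ℝ) →ₗ[ℝ] (Fin (d + 1) → ℝ) := LinearMap.pi (fun i => f i) with hΦ
  have hΦker : LinearMap.ker Φ = ⊥ := by
    rw [LinearMap.ker_eq_bot']
    intro v hv
    obtain ⟨x₀, hx₀, huniq⟩ := hgen i₁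
    have h1 : x₀ + v = x₀ := by
      apply huniq
      intro j hj
      have : f j v = 0 := congrFun hv j
      rw [map_add, hx₀ j hj, this, add_zero]
    exact add_eq_left.mp h1
  obtain ⟨K, hK0, hK⟩ := Φ.exists_antilipschitzWith hΦker
  set M : ℝ := ∑ i, (|c i| + t / L i) with hM
  have hMnonneg : ∀ i : Fin (d + 1), 0 ≤ |c i| + t / L i := by
    intro i
    have := hdivpos i
    have := abs_nonneg (c i)
    linarith
  have hbound : (⋂ i, {x : Fin d → ℝ | c i < f i x}) ⊆ Φ ⁻¹' Metric.closedBall 0 M := by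
    intro x hx
    simp only [mem_iInter, mem_setOf_eq] at hx
    have hup : ∀ i, f i x - c i ≤ t / L i := by
      have hkx := hkey x
      rcases ht0.lt_or_gt with htneg | htpos
      · -- t < 0, all L j < 0
        have hLn : ∀ j, L j < 0 := fun j => by nlinarith [hsign j]
        intro i
        have h1 : ∑ j, -(L j * (f j x - c j)) = -t := by
          rw [Finset.sum_neg_distrib, hkx]
        have hle := Finset.single_le_sum
          (f := fun j => -(L j * (f j x - c j)))
          (fun j _ => show (0:ℝ) ≤ -(L j * (f j x - c j)) by nlinarith [hLn j, hx j])
          (Finset.mem_univ i)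
        rw [h1] at hle
        have h3 : f i x - c i ≤ (-t) / (-(L i)) := by
          rw [le_div_iff₀ (by linarith [hLn i])]
          linarith
        rwa [neg_div_neg_eq] at h3
      · -- t > 0, all L j > 0
        have hLp : ∀ j, 0 < L j := fun j => by nlinarith [hsign j]
        intro i
        have hle := Finset.single_le_sum
          (f := fun j => L j * (f j x - c j))
          (fun j _ => show (0:ℝ) ≤ L j * (f j x - c j) by nlinarith [hLp j, hx j])
          (Finset.mem_univ i)
        rw [hkx] at hle
        rw [le_div_iff₀ (hLp i)]
        linarith
    simp only [mem_preimage, Metric.mem_closedBall, dist_zero_right]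
    rw [pi_norm_le_iff_of_nonneg (Finset.sum_nonneg (fun i _ => hMnonneg i))]
    intro i
    have hΦi : Φ x i = f i x := rfl
    rw [hΦi, Real.norm_eq_abs]
    have habs : |f i x| ≤ |c i| + t / L i := by
      have h1 : f i x - c i ≤ t / L i := hup i
      have h2 : 0 < f i x - c i := by linarith [hx i]
      have : |f i x| = |c i + (f i x - c i)| := by ring_nf
      rw [this]
      calc |c i + (f i x - c i)| ≤ |c i| + |f i x - c i| := abs_add_le _ _
        _ = |c i| + (f i x - c i) := by rw [abs_of_pos h2]
        _ ≤ |c i| + t / L i := by linarith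
    calc |f i x| ≤ |c i| + t / L i := habs
      _ ≤ M := Finset.single_le_sum (fun j _ => hMnonneg j) (Finset.mem_univ i)
  exact (hK.isBounded_preimage Metric.isBounded_closedBall).subset hbound
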